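/- Let K be a field of characteristic not 2, V a K-vector space of dimension 4, and Q a quadratic form on V. Then for every element x of the Clifford algebra of Q there exist s, d : K such that (x * conj x) * (algebraMap s - x * conj x) = algebraMap d, where conj y := reverse (involute y). (This is the paper's four-dimensional determinant formula Det(A) = A⟦A⟧₁₂⟦A⟦A⟧₁₂⟧₃₄: since ξ := A⟦A⟧₁₂ = A·conj(A) has only grades {0,3,4}, the grade-negation ⟦ξ⟧₃₄ equals algebraMap s − ξ with s twice the grade-0 coefficient of ξ, and the theorem asserts the existence of such a scalar s making the product a scalar d.) -/

import Mathlib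

open CliffordAlgebra

namespace DetAux

variable {K A : Type*} [Field K] [Ring A] [Algebra K A]

/-- Right-nested monomial in generators `e`. -/
def mon (e : Fin 4 → A) : List (Fin 4) → A
  | [] => 1
  | i :: l => e i * mon e l

theorem mon_append (e : Fin 4 → A) (l l' : List (Fin 4)) :
    mon e (l ++ l') = mon e l * mon e l' := by
  induction l with
  | nil => simp [mon]
  | cons i t ih => simp [mon, ih, mul_assoc]

variable {e : Fin 4 → A} {q : Fin 4 → K}

section rels

theorem e_mul_e_mul (hsw : ∀ i j, i ≠ j → e i * e j = -(e j * e i)) (i j : Fin 4) (h : i ≠ j) (y : A) :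
    e i * (e j * y) = -(e j * (e i * y)) := by
  rw [← mul_assoc, hsw i j h, neg_mul, mul_assoc]

theorem e_mul_self_mul (hsq : ∀ i, e i * e i = algebraMap K A (q i)) (i : Fin 4) (y : A) :
    e i * (e i * y) = q i • y := by
  rw [← mul_assoc, hsq i, Algebra.smul_def]

/-- move a generator from the right to the left across a list avoiding it -/
theorem mon_mul_e (hsw : ∀ i j, i ≠ j → e i * e j = -(e j * e i)) (i : Fin 4) :
    ∀ t : List (Fin 4), (∀ j ∈ t, i ≠ j) →
      mon e t * e i = ((-1 : K)) ^ t.length • (e i * mon e t) := by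
  intro t
  induction t with
  | nil => simp [mon]
  | cons j t ih =>
      intro h
      have hij : i ≠ j := h j (by simp)
      rw [mon, mul_assoc, ih (fun a ha => h a (by simp [ha])),
        mul_smul_comm, e_mul_e_mul hsw i j hij]
      simp [mon, pow_succ, smul_smul, mul_comm]

/-- insertion lemma -/
theorem e_mul_sorted (hsq : ∀ i, e i * e i = algebraMap K A (q i)) (hsw : ∀ i j, i ≠ j → e i * e j = -(e j * e i)) (i : Fin 4) :
    ∀ s : List (Fin 4), s.Pairwise (· < ·) →
      ∃ (c : K) (s' : List (Fin 4)), s'.Pairwise (· < ·) ∧ (∀ a ∈ s', a ∈ i :: s) ∧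
        e i * mon e s = c • mon e s' := by
  intro s
  induction s generalizing i with
  | nil =>
      intro _
      exact ⟨1, [i], by simp, by simp, by simp [mon]⟩
  | cons j t ih =>
      intro hs
      have ht : t.Pairwise (· < ·) := hs.of_cons
      have hjt : ∀ a ∈ t, j < a := fun a ha => (List.pairwise_cons.1 hs).1 a ha
      rcases lt_trichotomy i j with hlt | heq | hgt
      · refine ⟨1, i :: j :: t, ?_, ?_, by simp [mon]⟩
        · exact List.pairwise_cons.2 ⟨fun a ha => by
            rcases List.mem_cons.1 ha with rfl | ha
            · exact hlt
            · exact hlt.trans (hjt a ha), hs⟩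
        · simp
      · subst heq
        exact ⟨q i, t, ht, fun a ha => by simp [ha], by
          rw [mon, e_mul_self_mul hsq]⟩
      · obtain ⟨c, s', hs', hsub, heq⟩ := ih i ht
        refine ⟨-c, j :: s', ?_, ?_, ?_⟩
        · refine List.pairwise_cons.2 ⟨fun a ha => ?_, hs'⟩
          rcases List.mem_cons.1 (hsub a ha) with rfl | ha'
          · exact hgt
          · exact hjt a ha'
        · intro a ha
          rcases List.mem_cons.1 ha with rfl | ha'
          · simp
          · rcases List.mem_cons.1 (hsub a ha') with rfl | h''
            · simp
            · simp [h'']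
        · rw [mon, e_mul_e_mul hsw i j hgt.ne', heq, mul_smul_comm]
          simp [mon, neg_smul]

theorem mon_reduce (hsq : ∀ i, e i * e i = algebraMap K A (q i)) (hsw : ∀ i j, i ≠ j → e i * e j = -(e j * e i)) :
    ∀ l : List (Fin 4), ∃ (c : K) (s : List (Fin 4)), s.Pairwise (· < ·) ∧
      mon e l = c • mon e s := by
  intro l
  induction l with
  | nil => exact ⟨1, [], by simp, by simp⟩
  | cons i t ih =>
      obtain ⟨c, s, hs, heq⟩ := ih
      obtain ⟨c', s', hs', _, heq'⟩ := e_mul_sorted hsq hsw i s hs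
      exact ⟨c * c', s', hs', by rw [mon, heq, mul_smul_comm, heq', smul_smul]⟩

end rels



namespace Part2
variable {K V : Type*} [Field K] [AddCommGroup V] [Module K V]
variable (Q : QuadraticForm K V)

/-- sign of conjugation on grade-k monomials -/
def sgn (K : Type*) [Field K] : ℕ → K
  | 0 => 1
  | (k+1) => (-1 : K) ^ (k+1) * sgn K k

theorem conj_mon (v : Fin 4 → V)
    (hsw : ∀ i j, i ≠ j → ι Q (v i) * ι Q (v j) = -(ι Q (v j) * ι Q (v i))) :
    ∀ l : List (Fin 4), l.Nodup →
      reverse (involute (mon (fun i => ι Q (v i)) l)) =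
        sgn K l.length • mon (fun i => ι Q (v i)) l := by
  intro l
  induction l with
  | nil => simp [mon, sgn]
  | cons i t ih =>
      intro hnd
      have hit : ∀ j ∈ t, i ≠ j := fun j hj h => (List.nodup_cons.1 hnd).1 (h ▸ hj)
      have hnt : t.Nodup := (List.nodup_cons.1 hnd).2
      have step : reverse (involute (mon (fun i => ι Q (v i)) (i :: t))) =
          -(reverse (involute (mon (fun i => ι Q (v i)) t)) * ι Q (v i)) := by
        rw [mon, map_mul, involute_ι, neg_mul, map_neg, reverse.map_mul, reverse_ι]
      rw [step, ih hnt, smul_mul_assoc, mon_mul_e (K := K) hsw i t hit, mon]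
      rw [smul_smul]
      show _ = sgn K (t.length + 1) • _
      rw [sgn]
      simp only [List.length_cons, pow_succ, neg_smul, smul_smul]
      rw [← neg_smul]; ring_nf

end Part2


end DetAux

set_option maxHeartbeats 1600000 in
open DetAux DetAux.Part2 in
theorem det_dim_four_first (K V : Type*) [Field K] [AddCommGroup V] [Module K V]
    [FiniteDimensional K V] (h2 : (2 : K) ≠ 0)
    (hdim : Module.finrank K V = 4)
    (Q : QuadraticForm K V) (x : CliffordAlgebra Q) :
    ∃ s d : K,
      (x * reverse (involute x)) *
          (algebraMap K (CliffordAlgebra Q) s - x * reverse (involute x)) =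
        algebraMap K (CliffordAlgebra Q) d := by
  haveI : Invertible (2 : K) := invertibleOfNonzero h2
  obtain ⟨b0, hb0⟩ := LinearMap.BilinForm.exists_orthogonal_basis
    (⟨QuadraticMap.associated_isSymm K Q⟩ : (QuadraticMap.associatedHom K Q).IsSymm)
  let b : Module.Basis (Fin 4) K V := b0.reindex (finCongr hdim)
  set e : Fin 4 → CliffordAlgebra Q := fun i => ι Q (b i) with he
  set q : Fin 4 → K := fun i => Q (b i) with hq
  have hsq : ∀ i, e i * e i = algebraMap K (CliffordAlgebra Q) (q i) := fun i =>
    ι_sq_scalar Q (b i)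
  have hassoc : ∀ i j : Fin 4, i ≠ j →
      QuadraticMap.associatedHom K Q (b i) (b j) = 0 := by
    intro i j hij
    have hne : (finCongr hdim).symm i ≠ (finCongr hdim).symm j := fun h =>
      hij (by simpa using congrArg (finCongr hdim) h)
    have h := hb0 hne
    rw [show b i = b0 ((finCongr hdim).symm i) from b0.reindex_apply _ i,
      show b j = b0 ((finCongr hdim).symm j) from b0.reindex_apply _ j]
    exact h
  have hpolar : ∀ i j : Fin 4, i ≠ j → QuadraticMap.polar Q (b i) (b j) = 0 := by
    intro i j hij
    have h1 : QuadraticMap.polar Q (b i) (b j)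
        = ((2 • QuadraticMap.associatedHom K Q) (b i)) (b j) := by simp
    rw [h1, LinearMap.smul_apply, LinearMap.smul_apply, hassoc i j hij, smul_zero]
  have hsw : ∀ i j : Fin 4, i ≠ j → e i * e j = -(e j * e i) := by
    intro i j hij
    have h := CliffordAlgebra.ι_mul_ι_add_swap (Q := Q) (b i) (b j)
    rw [hpolar i j hij, map_zero] at h
    exact eq_neg_of_add_eq_zero_left h
  set T : Submodule K (CliffordAlgebra Q) :=
    Submodule.span K (Set.range (mon e)) with hT
  have hmonT : ∀ l, mon e l ∈ T := fun l => Submodule.subset_span ⟨l, rfl⟩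
  have hmulT : ∀ y ∈ T, ∀ z ∈ T, y * z ∈ T := by
    intro y hy
    refine Submodule.span_induction ?_ ?_ ?_ ?_ hy
    · rintro _ ⟨l, rfl⟩ z hz
      refine Submodule.span_induction ?_ ?_ ?_ ?_ hz
      · rintro _ ⟨l', rfl⟩
        rw [← mon_append]
        exact hmonT _
      · simp
      · intro u v _ _ hu hv
        rw [mul_add]; exact add_mem hu hv
      · intro c u _ hu
        rw [mul_smul_comm]; exact Submodule.smul_mem _ _ hu
    · intro z _; simp
    · intro u v _ _ hu hv z hz
      rw [add_mul]; exact add_mem (hu z hz) (hv z hz)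
    · intro c u _ hu z hz
      rw [smul_mul_assoc]; exact Submodule.smul_mem _ _ (hu z hz)
  have hallT : ∀ y : CliffordAlgebra Q, y ∈ T := by
    intro y
    induction y using CliffordAlgebra.induction with
    | algebraMap r =>
        rw [Algebra.algebraMap_eq_smul_one]
        exact Submodule.smul_mem _ _ (by simpa [mon] using hmonT [])
    | ι v =>
        rw [← b.sum_repr v, map_sum]
        refine Submodule.sum_mem _ fun i _ => ?_
        rw [map_smul]
        exact Submodule.smul_mem _ _ (by simpa [mon] using hmonT [i])
    | mul u v hu hv => exact hmulT u hu v hv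
    | add u v hu hv => exact add_mem hu hv
  set U : Submodule K (CliffordAlgebra Q) := Submodule.span K
    (insert (1 : CliffordAlgebra Q)
      {mon e [0,1,2], mon e [0,1,3], mon e [0,2,3], mon e [1,2,3], mon e [0,1,2,3]}) with hU
  have hone : (1 : CliffordAlgebra Q) ∈ U := Submodule.subset_span (Set.mem_insert _ _)
  have hsorted : ∀ s : List (Fin 4), s.Pairwise (· < ·) →
      (1 + sgn K s.length) • mon e s ∈ U := by
    intro s hs
    rcases s with _ | ⟨a, _ | ⟨b', _ | ⟨c, _ | ⟨d, _ | ⟨e5, t⟩⟩⟩⟩⟩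
    · simp only [List.length_nil, sgn]
      norm_num
      simpa [mon] using Submodule.smul_mem U 2 hone
    · simp only [List.length_cons, List.length_nil, sgn]
      norm_num
    · simp only [List.length_cons, List.length_nil, sgn]
      norm_num
    · have h1 : a < b' := (List.pairwise_cons.1 hs).1 b' (by simp)
      have h2 : b' < c := (List.pairwise_cons.1 (List.pairwise_cons.1 hs).2).1 c (by simp)
      have key : mon e [a, b', c] ∈ U := by
        fin_cases a <;> fin_cases b' <;> fin_cases c <;>
          first
            | exact absurd h1 (by decide)
            | exact absurd h2 (by decide)
            | exact Submodule.subset_span (by simp)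
      simp only [List.length_cons, List.length_nil, sgn]
      norm_num
      simpa using Submodule.smul_mem U 2 key
    · have h1 : a < b' := (List.pairwise_cons.1 hs).1 b' (by simp)
      have h2 : b' < c := (List.pairwise_cons.1 (List.pairwise_cons.1 hs).2).1 c (by simp)
      have h3 : c < d :=
        (List.pairwise_cons.1 (List.pairwise_cons.1 (List.pairwise_cons.1 hs).2).2).1 d (by simp)
      have key : mon e [a, b', c, d] ∈ U := by
        fin_cases a <;> fin_cases b' <;> fin_cases c <;> fin_cases d <;>
          first
            | exact absurd h1 (by decide)
            | exact absurd h2 (by decide)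
            | exact absurd h3 (by decide)
            | exact Submodule.subset_span (by simp)
      simp only [List.length_cons, List.length_nil, sgn]
      norm_num
      simpa using Submodule.smul_mem U 2 key
    · exfalso
      have hnd : (a :: b' :: c :: d :: e5 :: t).Nodup := hs.nodup
      have := hnd.length_le_card
      simp at this
      omega
  have hsw' : ∀ i j : Fin 4, i ≠ j →
      ι Q (b i) * ι Q (b j) = -(ι Q (b j) * ι Q (b i)) := hsw
  have hplus : ∀ y ∈ T, y + reverse (involute y) ∈ U := by
    intro y hy
    refine Submodule.span_induction ?_ ?_ ?_ ?_ hy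
    · rintro _ ⟨l, rfl⟩
      obtain ⟨c, s, hs, heq⟩ := mon_reduce hsq hsw l
      have hc := conj_mon Q b hsw' s hs.nodup
      rw [← he] at hc
      rw [heq]
      have hcalc : c • mon e s + reverse (involute (c • mon e s))
          = c • ((1 + sgn K s.length) • mon e s) := by
        rw [map_smul, map_smul, hc, ← smul_add, add_smul, one_smul]
      rw [hcalc]
      exact Submodule.smul_mem _ _ (hsorted s hs)
    · simp
    · intro u v _ _ hu hv
      rw [map_add, map_add, add_add_add_comm]
      exact add_mem hu hv
    · intro c u _ hu
      rw [map_smul, map_smul, ← smul_add]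
      exact Submodule.smul_mem _ _ hu
  set ξ : CliffordAlgebra Q := x * reverse (involute x) with hξ
  have hconjξ : reverse (involute ξ) = ξ := by
    rw [hξ, map_mul, reverse.map_mul]
    congr 1
    rw [reverse_involute, reverse_reverse, involute_involute]
  have hξU : ξ ∈ U := by
    have h := hplus ξ (hallT ξ)
    rw [hconjξ] at h
    have h2' : ξ + ξ = (2 : K) • ξ := (two_smul K ξ).symm
    rw [h2'] at h
    have h3 := Submodule.smul_mem U (2 : K)⁻¹ h
    rwa [smul_smul, inv_mul_cancel₀ h2, one_smul] at h3
  rw [hU, Submodule.mem_span_insert] at hξU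
  obtain ⟨a, z, hz, hzeq⟩ := hξU
  have r10 := fun y => e_mul_e_mul hsw 1 0 (by decide) y
  have r20 := fun y => e_mul_e_mul hsw 2 0 (by decide) y
  have r21 := fun y => e_mul_e_mul hsw 2 1 (by decide) y
  have r30 := fun y => e_mul_e_mul hsw 3 0 (by decide) y
  have r31 := fun y => e_mul_e_mul hsw 3 1 (by decide) y
  have r32 := fun y => e_mul_e_mul hsw 3 2 (by decide) y
  have d0 := e_mul_self_mul hsq
  have hanti : ∀ u ∈ ({mon e [0,1,2], mon e [0,1,3], mon e [0,2,3], mon e [1,2,3],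
      mon e [0,1,2,3]} : Set (CliffordAlgebra Q)), ∀ w ∈ ({mon e [0,1,2], mon e [0,1,3],
      mon e [0,2,3], mon e [1,2,3], mon e [0,1,2,3]} : Set (CliffordAlgebra Q)),
      u * w + w * u ∈ Submodule.span K {(1 : CliffordAlgebra Q)} := by
    intro u hu w hw
    simp only [Set.mem_insert_iff, Set.mem_singleton_iff] at hu hw
    rcases hu with rfl | rfl | rfl | rfl | rfl <;> rcases hw with rfl | rfl | rfl | rfl | rfl <;>
      simp only [mon, one_mul, mul_assoc, mul_neg, neg_mul, mul_smul_comm, smul_smul,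
        neg_neg, smul_neg, r10, r20, r21, r30, r31, r32, d0, neg_add_cancel,
        add_neg_cancel] <;>
      first
        | exact Submodule.zero_mem _
        | (repeat' first
            | exact Submodule.mem_span_singleton_self _
            | exact Submodule.zero_mem _
            | apply neg_mem
            | apply add_mem
            | apply Submodule.smul_mem)
  have hzz : ∀ u ∈ Submodule.span K ({mon e [0,1,2], mon e [0,1,3], mon e [0,2,3],
      mon e [1,2,3], mon e [0,1,2,3]} : Set (CliffordAlgebra Q)),
      ∀ w ∈ Submodule.span K ({mon e [0,1,2], mon e [0,1,3], mon e [0,2,3],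
      mon e [1,2,3], mon e [0,1,2,3]} : Set (CliffordAlgebra Q)),
      u * w + w * u ∈ Submodule.span K {(1 : CliffordAlgebra Q)} := by
    intro u hu
    refine Submodule.span_induction ?_ ?_ ?_ ?_ hu
    · intro g hg w hw
      refine Submodule.span_induction ?_ ?_ ?_ ?_ hw
      · intro g' hg'
        exact hanti g hg g' hg'
      · simp
      · intro u1 u2 _ _ h1 h2
        rw [mul_add, add_mul, add_add_add_comm]
        exact add_mem h1 h2
      · intro c u1 _ h1
        rw [mul_smul_comm, smul_mul_assoc, ← smul_add]
        exact Submodule.smul_mem _ _ h1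
    · intro w _
      simp
    · intro u1 u2 _ _ h1 h2 w hw
      rw [add_mul, mul_add, add_add_add_comm]
      exact add_mem (h1 w hw) (h2 w hw)
    · intro c u1 _ h1 w hw
      rw [smul_mul_assoc, mul_smul_comm, ← smul_add]
      exact Submodule.smul_mem _ _ (h1 w hw)
  have hz2 : z * z ∈ Submodule.span K {(1 : CliffordAlgebra Q)} := by
    have h := hzz z hz z hz
    rw [← two_smul K (z * z)] at h
    have h3 := Submodule.smul_mem _ ((2 : K)⁻¹) h
    rwa [smul_smul, inv_mul_cancel₀ h2, one_smul] at h3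
  obtain ⟨d', hd'⟩ := Submodule.mem_span_singleton.1 hz2
  refine ⟨2 * a, a * a - d', ?_⟩
  rw [hzeq, Algebra.algebraMap_eq_smul_one, Algebra.algebraMap_eq_smul_one]
  have hstep : (2 * a) • (1 : CliffordAlgebra Q) - (a • 1 + z) = a • 1 - z := by
    rw [two_mul, add_smul]
    abel
  rw [hstep]
  have hexp : (a • (1 : CliffordAlgebra Q) + z) * (a • 1 - z) = (a * a) • 1 - z * z := by
    rw [mul_sub, add_mul, add_mul, smul_mul_assoc, smul_mul_assoc, one_mul, mul_smul_comm,
      smul_smul, mul_one]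
    rw [one_mul]
    abel
  rw [hexp, ← hd', ← sub_smul]
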